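/- Every permutation σ of {1,...,n} can be written uniquely as σ = p_2^{j_2} ∘ p_3^{j_3} ∘ ⋯ ∘ p_n^{j_n} where 0 ≤ j_i < i for each i. -/

import Mathlib

def pcyc (k : ℕ) : Equiv.Perm ℕ := (List.range' 1 k).formPerm

/-- The ordered composition `p_2^{e 2} ∘ p_3^{e 3} ∘ ⋯ ∘ p_n^{e n}`. -/
def circProd (n : ℕ) (e : ℕ → ℕ) : Equiv.Perm ℕ :=
  ((List.range' 2 (n - 1)).map fun i => (pcyc i) ^ (e i)).prod

lemma pcyc_fix (k x : ℕ) (hx : x ∉ Set.Icc 1 k) : pcyc k x = x := by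
  apply List.formPerm_apply_of_notMem
  intro h
  rw [List.mem_range'] at h
  obtain ⟨i, hi, rfl⟩ := h
  simp [Set.mem_Icc] at hx
  omega

lemma pcyc_pow_fix (k m x : ℕ) (hx : x ∉ Set.Icc 1 k) : ((pcyc k) ^ m) x = x := by
  induction m with
  | zero => rfl
  | succ m ih => rw [pow_succ, Equiv.Perm.mul_apply, pcyc_fix k x hx, ih]

lemma pcyc_pow_apply (k m i : ℕ) (hi : i < k) :
    ((pcyc k) ^ m) (1 + i) = 1 + (i + m) % k := by
  have h := List.formPerm_pow_apply_getElem (List.range' 1 k)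
    (List.nodup_range' (s := 1) (n := k)) m i (by simpa using hi)
  simpa [pcyc, List.getElem_range'] using h

lemma pcyc_pow_key (n j b : ℕ) (hb : 1 ≤ b) (hbn : b ≤ n + 1) (hj : j = n + 1 - b) :
    ((pcyc (n+1)) ^ j) b = n + 1 := by
  have h := pcyc_pow_apply (n+1) j (b-1) (by omega)
  have hb1 : 1 + (b - 1) = b := by omega
  rw [hb1] at h
  rw [h]
  have h2 : b - 1 + j = n := by omega
  rw [h2, Nat.mod_eq_of_lt (by omega)]
  omega

lemma prod_fix (L : List (Equiv.Perm ℕ)) (x : ℕ) (h : ∀ p ∈ L, p x = x) :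
    L.prod x = x := by
  induction L with
  | nil => rfl
  | cons p t ih =>
      rw [List.prod_cons, Equiv.Perm.mul_apply,
        ih (fun q hq => h q (List.mem_cons_of_mem p hq)), h p (List.mem_cons_self)]

lemma circProd_fix (n : ℕ) (e : ℕ → ℕ) (x : ℕ) (hx : x ∉ Set.Icc 1 n) :
    circProd n e x = x := by
  apply prod_fix
  intro p hp
  simp only [List.mem_map] at hp
  obtain ⟨i, hi, rfl⟩ := hp
  rw [List.mem_range'] at hi
  obtain ⟨t, ht, rfl⟩ := hi
  apply pcyc_pow_fix
  simp only [Set.mem_Icc] at hx ⊢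
  omega

lemma circProd_congr (n : ℕ) (e e' : ℕ → ℕ) (h : ∀ i, 2 ≤ i → i ≤ n → e i = e' i) :
    circProd n e = circProd n e' := by
  unfold circProd
  congr 1
  apply List.map_congr_left
  intro i hi
  rw [List.mem_range'] at hi
  obtain ⟨t, ht, rfl⟩ := hi
  rw [h _ (by omega) (by omega)]

lemma circProd_succ (n : ℕ) (hn : 1 ≤ n) (e : ℕ → ℕ) :
    circProd (n+1) e = circProd n e * (pcyc (n+1)) ^ (e (n+1)) := by
  unfold circProd
  have h1 : n + 1 - 1 = (n - 1) + 1 := by omega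
  rw [h1, List.range'_concat, List.map_append, List.prod_append]
  have h2 : 2 + 1 * (n - 1) = n + 1 := by omega
  rw [h2]
  simp

theorem stmt4 (n : ℕ) (hn : 1 ≤ n) (σ : Equiv.Perm ℕ)
    (hσ : ∀ i, i ∉ Set.Icc 1 n → σ i = i) :
    ∃! j : ℕ → ℕ, (∀ i ∈ Finset.Icc 2 n, j i < i) ∧ (∀ i ∉ Finset.Icc 2 n, j i = 0) ∧
      σ = circProd n j := by
  induction n, hn using Nat.le_induction generalizing σ with
  | base =>
    have h1 : σ 1 = 1 := by
      by_contra h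
      have h2 := hσ (σ 1) (by simp [Set.mem_Icc]; omega)
      exact h (σ.injective h2)
    have hσ1 : σ = 1 := by
      ext x
      by_cases hx : x = 1
      · subst hx; simpa using h1
      · simpa using hσ x (by simp [Set.mem_Icc]; omega)
    refine ⟨fun _ => 0, ⟨?_, ?_, ?_⟩, ?_⟩
    · intro i hi; simp only [Finset.mem_Icc] at hi; omega
    · intro i _; rfl
    · simp [circProd, hσ1]
    · intro y ⟨_, hy2, _⟩
      funext i
      exact hy2 i (by simp only [Finset.mem_Icc]; omega)
  | succ n hn ih =>
    set b := σ⁻¹ (n+1) with hbdef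
    have hσb : σ b = n + 1 := σ.apply_symm_apply (n+1)
    have hb : 1 ≤ b ∧ b ≤ n + 1 := by
      by_contra h
      have h2 := hσ b (by simp [Set.mem_Icc]; omega)
      omega
    set j : ℕ := n + 1 - b with hjdef
    have hj : j ≤ n := by omega
    have hpj : ((pcyc (n+1)) ^ j) b = n + 1 :=
      pcyc_pow_key n j b hb.1 hb.2 rfl
    have hpjinv : ((pcyc (n+1)) ^ j)⁻¹ (n+1) = b := by
      rw [Equiv.Perm.inv_def, Equiv.symm_apply_eq]
      exact hpj.symm
    set τ : Equiv.Perm ℕ := σ * ((pcyc (n+1)) ^ j)⁻¹ with hτdef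
    have hστ : σ = τ * (pcyc (n+1)) ^ j := by
      rw [hτdef, inv_mul_cancel_right]
    have hτ : ∀ i, i ∉ Set.Icc 1 n → τ i = i := by
      intro x hx
      by_cases hx1 : x = n + 1
      · subst hx1
        rw [hτdef, Equiv.Perm.mul_apply, hpjinv, hσb]
      · have hfix : ((pcyc (n+1)) ^ j) x = x :=
          pcyc_pow_fix (n+1) j x (by simp only [Set.mem_Icc] at hx ⊢; omega)
        have hfixinv : ((pcyc (n+1)) ^ j)⁻¹ x = x := by
          rw [Equiv.Perm.inv_def, Equiv.symm_apply_eq]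
          exact hfix.symm
        rw [hτdef, Equiv.Perm.mul_apply, hfixinv]
        exact hσ x (by simp only [Set.mem_Icc] at hx ⊢; omega)
    obtain ⟨e, ⟨he1, he2, he3⟩, heu⟩ := ih τ hτ
    set J : ℕ → ℕ := fun i => if i = n + 1 then j else e i with hJdef
    have hJcirc : circProd (n+1) J = σ := by
      rw [circProd_succ n hn J]
      have h1 : circProd n J = circProd n e :=
        circProd_congr n J e (fun i h2 hin => by
          simp only [hJdef]; rw [if_neg (by omega)])
      have h2 : J (n+1) = j := by simp [hJdef]
      rw [h1, h2, ← he3, ← hστ]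
    refine ⟨J, ⟨?_, ?_, hJcirc.symm⟩, ?_⟩
    · intro i hi
      simp only [Finset.mem_Icc] at hi
      by_cases h : i = n + 1
      · simp [hJdef, h]; omega
      · simp only [hJdef]
        rw [if_neg h]
        exact he1 i (by simp [Finset.mem_Icc]; omega)
    · intro i hi
      simp only [Finset.mem_Icc] at hi
      simp only [hJdef]
      rw [if_neg (by omega)]
      exact he2 i (by simp [Finset.mem_Icc]; omega)
    · intro y ⟨hy1, hy2, hy3⟩
      have hyn : y (n+1) < n + 1 := hy1 (n+1) (by simp [Finset.mem_Icc]; omega)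
      set j' := y (n+1) with hj'def
      have hy3' : σ = circProd n y * (pcyc (n+1)) ^ j' := by
        rw [hy3, circProd_succ n hn y]
      -- compute b
      have hkey : ((pcyc (n+1)) ^ j') (n + 1 - j') = n + 1 :=
        pcyc_pow_key n j' (n + 1 - j') (by omega) (by omega) (by omega)
      have hC : circProd n y (n+1) = n + 1 :=
        circProd_fix n y (n+1) (by simp [Set.mem_Icc])
      have hσval : σ (n + 1 - j') = n + 1 := by
        rw [hy3', Equiv.Perm.mul_apply, hkey, hC]
      have hbj' : b = n + 1 - j' := σ.injective (by rw [hσb, hσval])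
      have hjj' : j' = j := by omega
      have hCτ : circProd n y = τ := by
        rw [hτdef, hy3', hjj', mul_inv_cancel_right]
      set e' : ℕ → ℕ := fun i => if i = n + 1 then 0 else y i with he'def
      have he'eq : e' = e := by
        apply heu
        refine ⟨?_, ?_, ?_⟩
        · intro i hi
          simp only [Finset.mem_Icc] at hi
          simp only [he'def]
          rw [if_neg (by omega)]
          exact hy1 i (by simp [Finset.mem_Icc]; omega)
        · intro i hi
          simp only [Finset.mem_Icc] at hi
          by_cases h : i = n + 1
          · simp [he'def, h]
          · simp only [he'def]
            rw [if_neg h]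
            exact hy2 i (by simp only [Finset.mem_Icc]; omega)
        · rw [← hCτ]
          exact circProd_congr n y e' (fun i h2 hin => by
            simp only [he'def]; rw [if_neg (by omega)])
      funext i
      by_cases h : i = n + 1
      · subst h
        simp only [hJdef, if_pos rfl]
        rw [← hj'def, hjj']
      · simp only [hJdef]
        rw [if_neg h, ← he'eq]
        simp only [he'def]
        rw [if_neg h]
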